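/- Let w_{t,r} : 𝔸(r) → 𝔸(r^{1+t}) be the pinching model (arg w_t(z) = arg z, log|w_t(z)| = ϱ_t(log|z|) with ϱ_t as in the pinching model definition). Let r(t₀) = r^{1/(2e^{2t₀})} and let E_{t₀} be one of the two components of 𝔸(r) ∖ cl(𝔸(r(t₀))). Then for all t ≥ t₀, mod w_t(E_{t₀}) = ((2t₀+1)/4) · mod 𝔸(r); in particular mod w_t(E_{t₀}) → ∞ as t₀ → ∞. -/

import Mathlib

noncomputable section

open Set

def stdAnnulus (r : ℝ) : Set ℂ := {z : ℂ | 1 / r < ‖z‖ ∧ ‖z‖ < r}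

/-- `A` is an annulus of modulus `m`: conformally equivalent to `𝔸(r)` with
`m = (log r)/π`. -/
def HasModulus (A : Set ℂ) (m : ℝ) : Prop :=
  ∃ r : ℝ, 1 < r ∧ m = Real.log r / Real.pi ∧
    ∃ f : ℂ → ℂ, DifferentiableOn ℂ f A ∧ Set.BijOn f A (stdAnnulus r)

/-- The radial profile of the pinching model for `x ≥ 0`. -/
def varrhoPos (r t x : ℝ) : ℝ := by
  classical exact
    if x ≤ Real.log r / (2 * Real.exp (2 * t)) then Real.exp (2 * t) * x
    else if x < Real.log r / 2 then
      (Real.log (2 * x / Real.log r) + 1 + 2 * t) * Real.log r / 2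
    else x + t * Real.log r

/-- The radial profile `ϱ_t`, extended as an odd function. -/
def varrho (r t x : ℝ) : ℝ := by
  classical exact if 0 ≤ x then varrhoPos r t x else - varrhoPos r t (-x)

/-- The pinching model homeomorphism `w_{t,r}`: it preserves arguments and acts by
`ϱ_t` on `log |z|`. -/
def pinch (r t : ℝ) (z : ℂ) : ℂ := by
  classical exact
    if z = 0 then 0
    else ((Real.exp (varrho r t (Real.log (‖z‖))) / ‖z‖ : ℝ) : ℂ) * z

lemma varrhoPos_eq {r t t₀ : ℝ} (hr : 1 < r) (ht : t₀ ≤ t) {x : ℝ}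
    (hx : Real.log r / (2 * Real.exp (2 * t₀)) < x) :
    varrhoPos r t x =
      if x < Real.log r / 2 then
        (Real.log (2 * x / Real.log r) + 1 + 2 * t) * Real.log r / 2
      else x + t * Real.log r := by
  have hL : 0 < Real.log r := Real.log_pos hr
  have hle : Real.log r / (2 * Real.exp (2 * t)) ≤ Real.log r / (2 * Real.exp (2 * t₀)) := by
    apply div_le_div_of_nonneg_left hL.le (by positivity)
    have := Real.exp_le_exp.mpr (by linarith : 2 * t₀ ≤ 2 * t)
    linarith
  rw [varrhoPos, if_neg (by linarith)]

lemma varrho_eq {r t t₀ : ℝ} (hr : 1 < r) (ht : t₀ ≤ t) {x : ℝ}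
    (hx : Real.log r / (2 * Real.exp (2 * t₀)) < x) :
    varrho r t x =
      if x < Real.log r / 2 then
        (Real.log (2 * x / Real.log r) + 1 + 2 * t) * Real.log r / 2
      else x + t * Real.log r := by
  have hL : 0 < Real.log r := Real.log_pos hr
  have hx0 : 0 < x := lt_trans (by positivity) hx
  rw [varrho, if_pos hx0.le, varrhoPos_eq hr ht hx]

lemma varrho_image {r t t₀ : ℝ} (hr : 1 < r) (ht₀ : 0 ≤ t₀) (ht : t₀ ≤ t) :
    (fun x => varrho r t x) ''
        Ioo (Real.log r / (2 * Real.exp (2 * t₀))) (Real.log r)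
      = Ioo ((1 + 2 * t - 2 * t₀) * Real.log r / 2) ((1 + t) * Real.log r) := by
  have hL : 0 < Real.log r := Real.log_pos hr
  set L := Real.log r with hLdef
  set x₀ := L / (2 * Real.exp (2 * t₀)) with hx₀def
  have hE : (0:ℝ) < Real.exp (2 * t₀) := Real.exp_pos _
  have hx₀pos : 0 < x₀ := by positivity
  have h1 : 1 - 2 * t₀ ≤ Real.exp (-(2 * t₀)) := by
    linarith [Real.add_one_le_exp (-(2 * t₀))]
  have key : (1 - 2 * t₀) * Real.exp (2 * t₀) ≤ 1 := by
    have h2 := mul_le_mul_of_nonneg_right h1 hE.le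
    rwa [← Real.exp_add, neg_add_cancel, Real.exp_zero] at h2
  have hx₀lb : (1 - 2 * t₀) * L / 2 ≤ x₀ := by
    rw [hx₀def, le_div_iff₀ (by positivity)]
    nlinarith [mul_le_mul_of_nonneg_right key hL.le]
  have hx₀le : x₀ ≤ L / 2 := by
    have h1' : (1:ℝ) ≤ Real.exp (2 * t₀) := by
      rw [← Real.exp_zero]; exact Real.exp_le_exp.mpr (by linarith)
    rw [hx₀def, div_le_div_iff₀ (by positivity) (by norm_num)]
    nlinarith
  ext y
  simp only [mem_image, mem_Ioo]
  constructor
  · rintro ⟨x, ⟨hx1, hx2⟩, rfl⟩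
    rw [varrho_eq hr ht hx1]
    split_ifs with h
    · have hxpos : 0 < x := lt_trans hx₀pos hx1
      have h2x : 0 < 2 * x / L := by positivity
      constructor
      · have hlog : Real.exp (-(2 * t₀)) < 2 * x / L := by
          rw [Real.exp_neg, inv_eq_one_div, div_lt_div_iff₀ hE hL]
          have := (div_lt_iff₀ (by positivity)).mp hx1
          nlinarith
        have hlog2 : -(2 * t₀) < Real.log (2 * x / L) :=
          (Real.lt_log_iff_exp_lt h2x).mpr hlog
        nlinarith
      · have hlog : Real.log (2 * x / L) < 0 :=
          Real.log_neg h2x (by rw [div_lt_one hL]; linarith)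
        nlinarith
    · push_neg at h
      constructor
      · have hxgt : (1 - 2 * t₀) * L / 2 < x := lt_of_le_of_lt hx₀lb hx1
        nlinarith
      · linarith
  · rintro ⟨hy1, hy2⟩
    by_cases hc : y < (1 + 2 * t) * L / 2
    · have hxgt : x₀ < L / 2 * Real.exp (2 * y / L - 1 - 2 * t) := by
        have heq : x₀ = L / 2 * Real.exp (-(2 * t₀)) := by
          rw [hx₀def, Real.exp_neg]; field_simp
        rw [heq]
        apply mul_lt_mul_of_pos_left _ (by positivity)
        apply Real.exp_lt_exp.mpr
        have : (1 + 2 * t - 2 * t₀) < 2 * y / L := by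
          rw [lt_div_iff₀ hL]; nlinarith
        linarith
      have he1 : Real.exp (2 * y / L - 1 - 2 * t) < 1 := by
        apply Real.exp_lt_one_iff.mpr
        have : 2 * y / L < 1 + 2 * t := by rw [div_lt_iff₀ hL]; nlinarith
        linarith
      have hlt : L / 2 * Real.exp (2 * y / L - 1 - 2 * t) < L / 2 := by
        nlinarith [Real.exp_pos (2 * y / L - 1 - 2 * t)]
      refine ⟨L / 2 * Real.exp (2 * y / L - 1 - 2 * t), ⟨hxgt, by linarith⟩, ?_⟩
      rw [varrho_eq hr ht hxgt, if_pos hlt]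
      have harg : 2 * (L / 2 * Real.exp (2 * y / L - 1 - 2 * t)) / L
          = Real.exp (2 * y / L - 1 - 2 * t) := by field_simp
      rw [harg, Real.log_exp]
      field_simp
      ring
    · push_neg at hc
      have hxgt : x₀ < y - t * L := by
        rcases eq_or_lt_of_le ht₀ with h0 | h0
        · have hx0 : x₀ = L / 2 := by rw [hx₀def, ← h0]; norm_num
          rw [hx0]; nlinarith
        · have hx₀lt : x₀ < L / 2 := by
            have h1' : (1:ℝ) < Real.exp (2 * t₀) := by
              rw [← Real.exp_zero]; exact Real.exp_lt_exp.mpr (by linarith)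
            rw [hx₀def, div_lt_div_iff₀ (by positivity) (by norm_num)]
            nlinarith
          linarith
      refine ⟨y - t * L, ⟨hxgt, by linarith⟩, ?_⟩
      rw [varrho_eq hr ht hxgt, if_neg (by push_neg; linarith)]
      ring

lemma varrho_image_neg {r t t₀ : ℝ} (hr : 1 < r) (ht₀ : 0 ≤ t₀) (ht : t₀ ≤ t) :
    (fun x => varrho r t x) ''
        Ioo (-Real.log r) (-(Real.log r / (2 * Real.exp (2 * t₀))))
      = Ioo (-((1 + t) * Real.log r)) (-((1 + 2 * t - 2 * t₀) * Real.log r / 2)) := by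
  have hL : 0 < Real.log r := Real.log_pos hr
  have hx₀pos : 0 < Real.log r / (2 * Real.exp (2 * t₀)) := by positivity
  have hodd : ∀ x : ℝ, x < 0 → varrho r t x = - varrho r t (-x) := by
    intro x hx
    rw [varrho, varrho, if_neg (by linarith), if_pos (by linarith)]
  ext y
  simp only [mem_image, mem_Ioo]
  constructor
  · rintro ⟨x, ⟨hx1, hx2⟩, rfl⟩
    have hxneg : x < 0 := by linarith
    rw [hodd x hxneg]
    have hmem : varrho r t (-x) ∈
        Ioo ((1 + 2 * t - 2 * t₀) * Real.log r / 2) ((1 + t) * Real.log r) := by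
      rw [← varrho_image hr ht₀ ht]
      exact ⟨-x, ⟨by linarith, by linarith⟩, rfl⟩
    obtain ⟨h1, h2⟩ := hmem
    exact ⟨by linarith, by linarith⟩
  · rintro ⟨hy1, hy2⟩
    have hmem : -y ∈ Ioo ((1 + 2 * t - 2 * t₀) * Real.log r / 2) ((1 + t) * Real.log r) :=
      ⟨by linarith, by linarith⟩
    rw [← varrho_image hr ht₀ ht] at hmem
    obtain ⟨x, ⟨hx1, hx2⟩, hxval⟩ := hmem
    refine ⟨-x, ⟨by linarith, by linarith [lt_trans hx₀pos hx1]⟩, ?_⟩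
    simp only at hxval
    rw [hodd (-x) (by linarith [lt_trans hx₀pos hx1]), neg_neg, hxval, neg_neg]

lemma abs_pinch {r t : ℝ} {z : ℂ} (hz : z ≠ 0) :
    ‖pinch r t z‖ = Real.exp (varrho r t (Real.log (‖z‖))) := by
  have habs : 0 < ‖z‖ := norm_pos_iff.mpr hz
  rw [pinch, if_neg hz, norm_mul, Complex.norm_real, Real.norm_eq_abs,
    abs_of_pos (by positivity), div_mul_cancel₀ _ habs.ne']

lemma pinch_image {r t p q : ℝ} (hp : 0 < p) (hq : 0 < q) {A B : ℝ}
    (himg : (fun x => varrho r t x) '' Ioo (Real.log p) (Real.log q) = Ioo A B) :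
    pinch r t '' {z : ℂ | p < ‖z‖ ∧ ‖z‖ < q}
      = {w : ℂ | Real.exp A < ‖w‖ ∧ ‖w‖ < Real.exp B} := by
  ext w
  simp only [mem_image, mem_setOf_eq]
  constructor
  · rintro ⟨z, ⟨hz1, hz2⟩, rfl⟩
    have habs : 0 < ‖z‖ := lt_trans hp hz1
    have hz : z ≠ 0 := by intro h; rw [h] at habs; simp at habs
    rw [abs_pinch hz]
    have hmem : varrho r t (Real.log (‖z‖)) ∈ Ioo A B := by
      rw [← himg]
      exact ⟨Real.log (‖z‖),
        ⟨Real.log_lt_log hp hz1, Real.log_lt_log habs hz2⟩, rfl⟩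
    exact ⟨Real.exp_lt_exp.mpr hmem.1, Real.exp_lt_exp.mpr hmem.2⟩
  · rintro ⟨hw1, hw2⟩
    have hwabs : 0 < ‖w‖ := lt_trans (Real.exp_pos A) hw1
    have hw : w ≠ 0 := by intro h; rw [h] at hwabs; simp at hwabs
    have hmem : Real.log (‖w‖) ∈ Ioo A B :=
      ⟨(Real.lt_log_iff_exp_lt hwabs).mpr hw1, by
        have := Real.log_lt_log hwabs hw2; rwa [Real.log_exp] at this⟩
    rw [← himg] at hmem
    obtain ⟨x, ⟨hx1, hx2⟩, hxval⟩ := hmem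
    simp only at hxval
    set z : ℂ := ((Real.exp x / ‖w‖ : ℝ) : ℂ) * w with hzdef
    have hzabs : ‖z‖ = Real.exp x := by
      rw [hzdef, norm_mul, Complex.norm_real, Real.norm_eq_abs, abs_of_pos (by positivity),
        div_mul_cancel₀ _ hwabs.ne']
    have hzne : z ≠ 0 := by
      rw [hzdef]
      exact mul_ne_zero (by
        simp only [ne_eq, Complex.ofReal_eq_zero]
        positivity) hw
    refine ⟨z, ⟨?_, ?_⟩, ?_⟩
    · rw [hzabs, ← Real.exp_log hp]; exact Real.exp_lt_exp.mpr hx1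
    · rw [hzabs, ← Real.exp_log hq]; exact Real.exp_lt_exp.mpr hx2
    · rw [pinch, if_neg hzne, hzabs, Real.log_exp, hxval, Real.exp_log hwabs, hzdef]
      rw [← mul_assoc, ← Complex.ofReal_mul]
      rw [div_mul_div_comm, mul_comm ‖w‖, div_self (by positivity)]
      simp

lemma hasModulus_annulus {a b : ℝ} (ha : 0 < a) (hab : a < b) :
    HasModulus {z : ℂ | a < ‖z‖ ∧ ‖z‖ < b}
      ((Real.log b - Real.log a) / (2 * Real.pi)) := by
  have hb : 0 < b := lt_trans ha hab
  have hlogs : Real.log a < Real.log b := Real.log_lt_log ha hab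
  set R : ℝ := Real.exp ((Real.log b - Real.log a) / 2) with hRdef
  have hR1 : 1 < R := by
    rw [hRdef, ← Real.exp_zero]
    exact Real.exp_lt_exp.mpr (by linarith)
  set c : ℝ := Real.exp (-(Real.log a + Real.log b) / 2) with hcdef
  have hc : 0 < c := Real.exp_pos _
  have hexpa : ∀ s : ℝ, Real.exp s * a = Real.exp (s + Real.log a) := fun s => by
    rw [Real.exp_add, Real.exp_log ha]
  have hexpb : ∀ s : ℝ, Real.exp s * b = Real.exp (s + Real.log b) := fun s => by
    rw [Real.exp_add, Real.exp_log hb]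
  have hca : c * a = 1 / R := by
    rw [hcdef, hexpa, hRdef, one_div, ← Real.exp_neg]
    congr 1; ring
  have hcb : c * b = R := by
    rw [hcdef, hexpb, hRdef]
    congr 1; ring
  refine ⟨R, hR1, ?_, fun z => (c : ℂ) * z, ?_, ?_, ?_, ?_⟩
  · rw [hRdef, Real.log_exp]; ring
  · exact ((differentiable_id.const_mul _) : Differentiable ℂ _).differentiableOn
  · rintro z ⟨hz1, hz2⟩
    have := norm_nonneg z
    constructor
    · rw [norm_mul, Complex.norm_real, Real.norm_eq_abs, abs_of_pos hc, ← hca]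
      exact mul_lt_mul_of_pos_left hz1 hc
    · rw [norm_mul, Complex.norm_real, Real.norm_eq_abs, abs_of_pos hc, ← hcb]
      exact mul_lt_mul_of_pos_left hz2 hc
  · intro z _ w _ h
    have hcne : (c : ℂ) ≠ 0 := by
      simp only [ne_eq, Complex.ofReal_eq_zero]; exact hc.ne'
    exact mul_left_cancel₀ hcne h
  · rintro w ⟨hw1, hw2⟩
    have hcne : (c : ℂ) ≠ 0 := by
      simp only [ne_eq, Complex.ofReal_eq_zero]; exact hc.ne'
    refine ⟨w / (c : ℂ), ⟨?_, ?_⟩, by field_simp⟩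
    · rw [norm_div, Complex.norm_real, Real.norm_eq_abs, abs_of_pos hc, lt_div_iff₀ hc]
      calc a * c = c * a := mul_comm _ _
        _ = 1 / R := hca
        _ < ‖w‖ := hw1
    · rw [norm_div, Complex.norm_real, Real.norm_eq_abs, abs_of_pos hc, div_lt_iff₀ hc]
      calc ‖w‖ < R := hw2
        _ = c * b := hcb.symm
        _ = b * c := mul_comm _ _

/-- With `r(t₀) = r^{1/(2 e^{2t₀})}` and `E_{t₀}` one of the two
components of `𝔸(r) ∖ cl 𝔸(r(t₀))`, for all `t ≥ t₀` the image `w_t(E_{t₀})` has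
modulus `((2t₀+1)/4)·mod 𝔸(r)`; in particular this modulus tends to `∞` with `t₀`. -/
theorem pinching_model_modulus (r t₀ : ℝ) (hr : 1 < r) (ht₀ : 0 ≤ t₀)
    (rt₀ : ℝ) (hrt₀ : rt₀ = Real.rpow r (1 / (2 * Real.exp (2 * t₀))))
    (E : Set ℂ)
    (hE : E = {z : ℂ | rt₀ < ‖z‖ ∧ ‖z‖ < r} ∨
          E = {z : ℂ | 1 / r < ‖z‖ ∧ ‖z‖ < 1 / rt₀}) :
    (∀ t ≥ t₀, HasModulus (pinch r t '' E) ((2 * t₀ + 1) / 4 * (Real.log r / Real.pi))) ∧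
    Filter.Tendsto (fun s : ℝ => (2 * s + 1) / 4 * (Real.log r / Real.pi))
      Filter.atTop Filter.atTop := by
  have hr0 : (0:ℝ) < r := lt_trans one_pos hr
  have hL : 0 < Real.log r := Real.log_pos hr
  have hrt0pos : 0 < rt₀ := by rw [hrt₀]; exact Real.rpow_pos_of_pos hr0 _
  have hlogrt : Real.log rt₀ = Real.log r / (2 * Real.exp (2 * t₀)) := by
    rw [hrt₀, show Real.rpow r (1 / (2 * Real.exp (2 * t₀)))
        = r ^ (1 / (2 * Real.exp (2 * t₀))) from rfl, Real.log_rpow hr0]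
    ring
  constructor
  · intro t ht
    have hAB : (1 + 2 * t - 2 * t₀) * Real.log r / 2 < (1 + t) * Real.log r := by
      nlinarith
    rcases hE with hE | hE
    · have himg : (fun x => varrho r t x) '' Ioo (Real.log rt₀) (Real.log r)
          = Ioo ((1 + 2 * t - 2 * t₀) * Real.log r / 2) ((1 + t) * Real.log r) := by
        rw [hlogrt]; exact varrho_image hr ht₀ ht
      rw [hE, pinch_image hrt0pos hr0 himg]
      have h := hasModulus_annulus (a := Real.exp ((1 + 2 * t - 2 * t₀) * Real.log r / 2))
        (b := Real.exp ((1 + t) * Real.log r)) (Real.exp_pos _) (Real.exp_lt_exp.mpr hAB)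
      rw [Real.log_exp, Real.log_exp] at h
      have hm : ((1 + t) * Real.log r - (1 + 2 * t - 2 * t₀) * Real.log r / 2)
          / (2 * Real.pi) = (2 * t₀ + 1) / 4 * (Real.log r / Real.pi) := by
        field_simp
        ring
      rwa [hm] at h
    · have hinvr : (0:ℝ) < 1 / r := by positivity
      have hinvrt : (0:ℝ) < 1 / rt₀ := by positivity
      have himg : (fun x => varrho r t x) '' Ioo (Real.log (1 / r)) (Real.log (1 / rt₀))
          = Ioo (-((1 + t) * Real.log r))
              (-((1 + 2 * t - 2 * t₀) * Real.log r / 2)) := by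
        rw [one_div, one_div, Real.log_inv, Real.log_inv, hlogrt]
        exact varrho_image_neg hr ht₀ ht
      rw [hE, pinch_image hinvr hinvrt himg]
      have h := hasModulus_annulus (a := Real.exp (-((1 + t) * Real.log r)))
        (b := Real.exp (-((1 + 2 * t - 2 * t₀) * Real.log r / 2))) (Real.exp_pos _)
        (Real.exp_lt_exp.mpr (by linarith))
      rw [Real.log_exp, Real.log_exp] at h
      have hm : (-((1 + 2 * t - 2 * t₀) * Real.log r / 2) - -((1 + t) * Real.log r))
          / (2 * Real.pi) = (2 * t₀ + 1) / 4 * (Real.log r / Real.pi) := by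
        field_simp
        ring
      rwa [hm] at h
  · have hk : 0 < Real.log r / Real.pi := div_pos hL Real.pi_pos
    apply Filter.Tendsto.atTop_mul_const hk
    apply Filter.Tendsto.atTop_div_const (by norm_num : (0:ℝ) < 4)
    exact Filter.tendsto_atTop_add_const_right _ 1
      (Filter.Tendsto.const_mul_atTop two_pos Filter.tendsto_id)
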